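/- The irreducible cyclic code C(r,N) has exactly one nonzero weight if and only if N₂ = gcd(N, (r-1)/(q-1)) = 1. -/

import Mathlib

open scoped Classical
open Finset Polynomial
set_option linter.unusedSectionVars false
set_option linter.unnecessarySeqFocus false
set_option maxHeartbeats 4000000

lemma aux_fiber {V W : Type} [AddCommGroup V] [Fintype V] [AddCommGroup W] [Fintype W]
    (φ : V →+ W) (h : Function.Surjective φ) :
    (Finset.univ.filter fun x => φ x = 0).card * Fintype.card W = Fintype.card V := by
  classical
  have hcard : (Finset.univ : Finset V).card
      = ∑ w : W, (Finset.univ.filter fun x => φ x = w).card :=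
    Finset.card_eq_sum_card_fiberwise (fun x _ => Finset.mem_univ (φ x))
  have hfib : ∀ w : W, (Finset.univ.filter fun x => φ x = w).card
      = (Finset.univ.filter fun x => φ x = 0).card := by
    intro w
    obtain ⟨v, hv⟩ := h w
    apply Finset.card_bij (fun x _ => x - v)
    · intro a ha
      simp only [Finset.mem_filter, Finset.mem_univ, true_and] at ha ⊢
      simp [map_sub, ha, hv]
    · intro a ha b hb hab
      simpa using congrArg (· + v) hab
    · intro b hb
      refine ⟨b + v, ?_, by simp⟩
      simp only [Finset.mem_filter, Finset.mem_univ, true_and] at hb ⊢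
      simp [map_add, hb, hv]
  rw [Finset.card_univ] at hcard
  rw [hcard, Finset.sum_congr rfl (fun w _ => hfib w), Finset.sum_const, Finset.card_univ,
    smul_eq_mul, mul_comm]

lemma aux_units_count {F : Type} [Field F] [Fintype F] (P : F → Prop) (h0 : P 0) :
    (Finset.univ.filter fun β : Fˣ => P ↑β).card + 1 = (Finset.univ.filter P).card := by
  classical
  have key : (Finset.univ.filter P)
      = insert (0:F) ((Finset.univ.filter fun β : Fˣ => P ↑β).image Units.val) := by
    ext x
    simp only [Finset.mem_filter, Finset.mem_univ, true_and, Finset.mem_insert,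
      Finset.mem_image]
    constructor
    · intro hx
      by_cases hx0 : x = 0
      · exact Or.inl hx0
      · exact Or.inr ⟨Units.mk0 x hx0, by simpa using hx, rfl⟩
    · rintro (rfl | ⟨β, hβ, rfl⟩)
      · exact h0
      · exact hβ
  have h0n : (0:F) ∉ (Finset.univ.filter fun β : Fˣ => P ↑β).image Units.val := by
    simp only [Finset.mem_image, not_exists]
    rintro β ⟨-, hβ⟩
    exact β.ne_zero hβ
  rw [key, Finset.card_insert_of_notMem h0n,
    Finset.card_image_of_injective _ Units.val_injective]

variable {K F : Type} [Field K] [Fintype K] [Field F] [Fintype F] [Algebra K F]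

lemma aux_units_count2 {F : Type} [Field F] [Fintype F] (P Q : F → Prop)
    (h0 : P 0) (h0' : Q 0) :
    (Finset.univ.filter fun β : Fˣ => P ↑β ∧ Q ↑β).card + 1
      = (Finset.univ.filter fun x : F => P x ∧ Q x).card := by
  have key : (Finset.univ.filter fun x : F => P x ∧ Q x)
      = insert (0:F) ((Finset.univ.filter fun β : Fˣ => P ↑β ∧ Q ↑β).image Units.val) := by
    ext x
    simp only [Finset.mem_filter, Finset.mem_univ, true_and, Finset.mem_insert,
      Finset.mem_image]
    constructor
    · intro hx
      by_cases hx0 : x = 0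
      · exact Or.inl hx0
      · exact Or.inr ⟨Units.mk0 x hx0, by simpa using hx, rfl⟩
    · rintro (rfl | ⟨β, hβ, rfl⟩)
      · exact ⟨h0, h0'⟩
      · exact hβ
  have h0n : (0:F) ∉ (Finset.univ.filter fun β : Fˣ => P ↑β ∧ Q ↑β).image Units.val := by
    simp only [Finset.mem_image, not_exists]
    rintro β ⟨-, hβ⟩
    exact β.ne_zero hβ
  rw [key, Finset.card_insert_of_notMem h0n,
    Finset.card_image_of_injective _ Units.val_injective]

lemma trace_nondeg (a : F) (h : ∀ y, Algebra.trace K F (y * a) = 0) : a = 0 := by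
  have : FiniteDimensional K F := Module.Finite.of_basis (Module.Basis.ofVectorSpace K F)
  exact (traceForm_nondegenerate K F).1 a
    (fun y => by simpa [Algebra.traceForm_apply, mul_comm] using h y)

lemma trace_hits_one (a : F) (ha : a ≠ 0) : ∃ x : F, Algebra.trace K F (x * a) = 1 := by
  by_contra hcon
  push_neg at hcon
  have h0 : ∀ y, Algebra.trace K F (y * a) = 0 := by
    intro y
    by_contra h
    set c := Algebra.trace K F (y * a) with hc
    have := hcon (c⁻¹ • y)
    rw [smul_mul_assoc, map_smul, smul_eq_mul, inv_mul_cancel₀ h] at this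
    exact this rfl
  exact ha (trace_nondeg a h0)

lemma count_one (a : F) (ha : a ≠ 0) :
    (Finset.univ.filter fun x : F => Algebra.trace K F (x * a) = 0).card * Fintype.card K
      = Fintype.card F := by
  set φ : F →+ K := AddMonoidHom.mk' (fun x => Algebra.trace K F (x * a))
    (by intro x y; simp [add_mul]) with hφ
  have hs : Function.Surjective φ := by
    intro k
    obtain ⟨x₀, hx₀⟩ := trace_hits_one (K := K) a ha
    refine ⟨k • x₀, ?_⟩
    simp [hφ, smul_mul_assoc, hx₀]
  have := aux_fiber φ hs
  simpa [hφ] using this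

lemma trace_sub_lemma (a b : F) (ha : a ≠ 0)
    (hsub : ∀ x, Algebra.trace K F (x * a) = 0 → Algebra.trace K F (x * b) = 0) :
    ∃ u : K, b = algebraMap K F u * a := by
  obtain ⟨x₀, hx₀⟩ := trace_hits_one (K := K) a ha
  refine ⟨Algebra.trace K F (x₀ * b), ?_⟩
  have key : ∀ y : F, Algebra.trace K F
      (y * (b - algebraMap K F (Algebra.trace K F (x₀ * b)) * a)) = 0 := by
    intro y
    have hw : Algebra.trace K F ((y - Algebra.trace K F (y * a) • x₀) * a) = 0 := by
      rw [sub_mul, map_sub, smul_mul_assoc, map_smul, smul_eq_mul, hx₀, mul_one, sub_self]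
    have h2 := hsub _ hw
    rw [sub_mul, map_sub, smul_mul_assoc, map_smul, smul_eq_mul, sub_eq_zero] at h2
    rw [mul_sub, map_sub, h2]
    have hsm : y * (algebraMap K F (Algebra.trace K F (x₀ * b)) * a)
        = (Algebra.trace K F (x₀ * b)) • (y * a) := by
      rw [Algebra.smul_def]; ring
    rw [hsm, map_smul, smul_eq_mul]
    ring
  have := trace_nondeg _ key
  rw [sub_eq_zero] at this
  exact this

lemma count_two (a b : F) (ha : a ≠ 0) (hb : b ≠ 0)
    (h1 : ∀ u : K, b ≠ algebraMap K F u * a) (h2 : ∀ u : K, a ≠ algebraMap K F u * b) :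
    (Finset.univ.filter fun x : F =>
        Algebra.trace K F (x * a) = 0 ∧ Algebra.trace K F (x * b) = 0).card
      * (Fintype.card K) ^ 2 = Fintype.card F := by
  have hni1 : ∃ x, Algebra.trace K F (x * a) = 0 ∧ Algebra.trace K F (x * b) ≠ 0 := by
    by_contra hcon
    push_neg at hcon
    obtain ⟨u, hu⟩ := trace_sub_lemma a b ha hcon
    exact h1 u hu
  have hni2 : ∃ x, Algebra.trace K F (x * b) = 0 ∧ Algebra.trace K F (x * a) ≠ 0 := by
    by_contra hcon
    push_neg at hcon
    obtain ⟨u, hu⟩ := trace_sub_lemma b a hb hcon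
    exact h2 u hu
  obtain ⟨xa, hxa0, hxab⟩ := hni1
  obtain ⟨xb, hxb0, hxba⟩ := hni2
  set φ : F →+ K × K := AddMonoidHom.mk'
    (fun x => (Algebra.trace K F (x * a), Algebra.trace K F (x * b)))
    (by intro x y; simp [add_mul, Prod.ext_iff]) with hφ
  have hs : Function.Surjective φ := by
    rintro ⟨k1, k2⟩
    refine ⟨((k1 / Algebra.trace K F (xb * a)) • xb + (k2 / Algebra.trace K F (xa * b)) • xa), ?_⟩
    simp [hφ, add_mul, smul_mul_assoc, hxa0, hxb0, Prod.ext_iff,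
      div_mul_cancel₀, hxba, hxab]
  have := aux_fiber φ hs
  rw [Fintype.card_prod] at this
  rw [pow_two]
  convert this using 2
  apply Finset.card_bij (fun x _ => x)
  · intro x hx
    simp only [Finset.mem_filter, Finset.mem_univ, true_and, hφ, AddMonoidHom.mk'_apply,
      Prod.ext_iff] at hx ⊢
    simpa using hx
  · intro x _ y _ h; exact h
  · intro x hx
    refine ⟨x, ?_, rfl⟩
    simp only [Finset.mem_filter, Finset.mem_univ, true_and, hφ, AddMonoidHom.mk'_apply,
      Prod.ext_iff] at hx ⊢
    simpa using hx


lemma mem_range_iff_pow (x : F) (hx : x ≠ 0) :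
    x ∈ Set.range (algebraMap K F) ↔ x ^ (Fintype.card K - 1) = 1 := by
  have hq2 : 2 ≤ Fintype.card K := Fintype.one_lt_card
  constructor
  · rintro ⟨u, rfl⟩
    have hu : u ≠ 0 := by rintro rfl; simp at hx
    rw [← map_pow, FiniteField.pow_card_sub_one_eq_one u hu, map_one]
  · intro h
    have hxq : x ^ Fintype.card K = x := by
      have : Fintype.card K = (Fintype.card K - 1) + 1 := by omega
      rw [this, pow_succ, h, one_mul]
    -- x is a root of X^q - X, whose roots are exactly the image of K
    set P : F[X] := X ^ (Fintype.card K) - X with hP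
    have hdeg : P.natDegree = Fintype.card K := by
      rw [hP]
      rw [natDegree_sub_eq_left_of_natDegree_lt] <;>
        simp [natDegree_X_pow, natDegree_X] <;> omega
    have hPne : P ≠ 0 := by
      intro h0
      rw [h0] at hdeg
      simp at hdeg
      omega
    have hsub : ((Finset.univ : Finset K).image (algebraMap K F)) ⊆ P.roots.toFinset := by
      intro y hy
      simp only [Finset.mem_image] at hy
      obtain ⟨u, -, rfl⟩ := hy
      rw [Multiset.mem_toFinset, Polynomial.mem_roots hPne]
      simp [hP, IsRoot, ← map_pow, FiniteField.pow_card]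
    have hcard1 : ((Finset.univ : Finset K).image (algebraMap K F)).card = Fintype.card K := by
      rw [Finset.card_image_of_injective _ (algebraMap K F).injective, Finset.card_univ]
    have hcard2 : P.roots.toFinset.card ≤ Fintype.card K := by
      refine le_trans (Multiset.toFinset_card_le _) ?_
      refine le_trans (Polynomial.card_roots' P) (le_of_eq hdeg)
    have heq : ((Finset.univ : Finset K).image (algebraMap K F)) = P.roots.toFinset :=
      Finset.eq_of_subset_of_card_le hsub (by omega)
    have hxmem : x ∈ P.roots.toFinset := by
      rw [Multiset.mem_toFinset, Polynomial.mem_roots hPne]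
      simp [hP, IsRoot, hxq]
    rw [← heq] at hxmem
    simp only [Finset.mem_image] at hxmem
    obtain ⟨u, -, rfl⟩ := hxmem
    exact ⟨u, rfl⟩

/-- The Hamming weight of the codeword `c(β) = (Tr_{r/q}(βθʲ))_{j=0}^{n-1}`. -/
noncomputable def codewordWeight (K F : Type) [Field K] [Field F] [Algebra K F]
    (θ : F) (n : ℕ) (β : F) : ℕ :=
  (Finset.univ.filter fun j : Fin n => Algebra.trace K F (β * θ ^ (j : ℕ)) ≠ 0).card

/-- `C(r,N)` has exactly one nonzero weight iff
`N₂ = gcd(N,(r-1)/(q-1)) = 1`. -/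
theorem stmt9 (p s m N q r n : ℕ) (hp : p.Prime) (hs : 0 < s) (hm : 0 < m)
    (hq : q = p ^ s) (hr : r = q ^ m) (hN : N ∣ r - 1) (hn : n = (r - 1) / N)
    (K F : Type) [Field K] [Fintype K] [Field F] [Fintype F] [Algebra K F]
    (hcardK : Fintype.card K = q) (hcardF : Fintype.card F = r)
    (α : Fˣ) (hα : ∀ x : Fˣ, x ∈ Subgroup.zpowers α)
    (hθ : ∀ x : F, x ∈ Algebra.adjoin K {((α ^ N : Fˣ) : F)}) :
    Set.ncard {w : ℕ | ∃ β : Fˣ,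
        w = codewordWeight K F ((α ^ N : Fˣ) : F) n (β : F)} = 1 ↔
      Nat.gcd N ((r - 1) / (q - 1)) = 1 := by
  clear hθ
  -- basic numeric facts
  have hq2 : 2 ≤ q := hcardK ▸ Fintype.one_lt_card
  have hr2 : 2 ≤ r := hcardF ▸ Fintype.one_lt_card
  have hNpos : 0 < N := by
    rcases Nat.eq_zero_or_pos N with h | h
    · subst h; rw [zero_dvd_iff] at hN; omega
    · exact h
  have hnN : n * N = r - 1 := by rw [hn]; exact Nat.div_mul_cancel hN
  have hnpos : 0 < n := by
    rcases Nat.eq_zero_or_pos n with h | h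
    · rw [h, zero_mul] at hnN; omega
    · exact h
  have hq1dvd : (q - 1) ∣ (r - 1) := by
    rw [hr]; simpa using Nat.sub_dvd_pow_sub_pow q 1 m
  set d := (r - 1) / (q - 1) with hddef
  have hdq : d * (q - 1) = r - 1 := Nat.div_mul_cancel hq1dvd
  have hdpos : 0 < d := by
    rcases Nat.eq_zero_or_pos d with h | h
    · rw [h, zero_mul] at hdq; omega
    · exact h
  set N₂ := Nat.gcd N d with hN2def
  have hN2pos : 0 < N₂ := Nat.gcd_pos_of_pos_left d hNpos
  obtain ⟨N', hN'⟩ : N₂ ∣ N := Nat.gcd_dvd_left N d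
  obtain ⟨e, he⟩ : N₂ ∣ d := Nat.gcd_dvd_right N d
  have hN'pos : 0 < N' := by
    rcases Nat.eq_zero_or_pos N' with h | h
    · rw [h, mul_zero] at hN'; omega
    · exact h
  have hepos : 0 < e := by
    rcases Nat.eq_zero_or_pos e with h | h
    · rw [h, mul_zero] at he; omega
    · exact h
  have hcop : Nat.Coprime N' e := by
    have h1 : N / N₂ = N' := by rw [hN']; exact Nat.mul_div_cancel_left _ hN2pos
    have h2 : d / N₂ = e := by rw [he]; exact Nat.mul_div_cancel_left _ hN2pos
    have := Nat.coprime_div_gcd_div_gcd (show 0 < Nat.gcd N d from hN2pos)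
    rwa [← hN2def, h1, h2] at this
  have hN'q : N' ∣ (q - 1) := by
    have h1 : N ∣ d * (q - 1) := hdq ▸ hN
    have h2 : N' ∣ e * (q - 1) := by
      rw [hN', he] at h1
      have h3 : N₂ * N' ∣ N₂ * (e * (q - 1)) := by rwa [← mul_assoc]
      exact (Nat.mul_dvd_mul_iff_left hN2pos).mp h3
    exact (Nat.Coprime.dvd_of_dvd_mul_left hcop h2)
  obtain ⟨t, ht⟩ := hN'q
  have htpos : 0 < t := by
    rcases Nat.eq_zero_or_pos t with h | h
    · rw [h, mul_zero] at ht; omega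
    · exact h
  have hnet : n = t * e := by
    have key : n * (N₂ * N') = (t * e) * (N₂ * N') := by
      rw [← hN', hnN, ← hdq, he, ht, hN']; ring
    exact Nat.eq_of_mul_eq_mul_right (by positivity) key
  have he5 : t * N = N₂ * (q - 1) := by rw [hN', ht]; ring
  -- the element θ and the zero-count function z
  set θ : F := ((α ^ N : Fˣ) : F) with hθdef
  have hθne : ∀ j : ℕ, θ ^ j ≠ 0 := fun j => pow_ne_zero _ (Units.ne_zero _)
  set z : Fˣ → ℕ := fun β =>
    (Finset.univ.filter fun j : Fin n =>
      Algebra.trace K F ((β : F) * θ ^ (j : ℕ)) = 0).card with hzdef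
  -- Step A : reduce to constancy of z
  have hw_z : ∀ β : Fˣ, codewordWeight K F θ n (β : F) + z β = n := by
    intro β
    have h := Finset.card_filter_add_card_filter_not
      (s := (Finset.univ : Finset (Fin n)))
      (p := fun j : Fin n => Algebra.trace K F ((β : F) * θ ^ (j : ℕ)) = 0)
    simp only [hzdef, codewordWeight, Finset.card_univ, Fintype.card_fin, ne_eq] at h ⊢
    omega
  have hred : (Set.ncard {w : ℕ | ∃ β : Fˣ,
      w = codewordWeight K F θ n (β : F)} = 1) ↔ (∀ β γ : Fˣ, z β = z γ) := by
    constructor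
    · intro h1 β γ
      obtain ⟨a, ha⟩ := Set.ncard_eq_one.mp h1
      have hβ : codewordWeight K F θ n (β : F) ∈ {w : ℕ | ∃ β : Fˣ,
          w = codewordWeight K F θ n (β : F)} := ⟨β, rfl⟩
      have hγ : codewordWeight K F θ n (γ : F) ∈ {w : ℕ | ∃ β : Fˣ,
          w = codewordWeight K F θ n (β : F)} := ⟨γ, rfl⟩
      rw [ha, Set.mem_singleton_iff] at hβ hγ
      have h2 := hw_z β; have h3 := hw_z γ
      omega
    · intro h2
      rw [Set.ncard_eq_one]
      refine ⟨codewordWeight K F θ n ((1 : Fˣ) : F), ?_⟩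
      ext w
      simp only [Set.mem_setOf_eq, Set.mem_singleton_iff]
      constructor
      · rintro ⟨β, rfl⟩
        have := h2 β 1
        have h3 := hw_z β; have h4 := hw_z 1
        omega
      · rintro rfl; exact ⟨1, rfl⟩
  rw [hred]
  -- ===== counting over single positions =====
  have hcount1 : ∀ j : Fin n,
      q * ((Finset.univ.filter fun β : Fˣ =>
        Algebra.trace K F ((β : F) * θ ^ ((j : ℕ))) = 0).card) + q = r := by
    intro j
    have h1 := aux_units_count (F := F)
      (fun x => Algebra.trace K F (x * θ ^ ((j : ℕ))) = 0) (by simp)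
    have h2 := count_one (K := K) (θ ^ ((j : ℕ))) (hθne j)
    rw [hcardK, hcardF] at h2
    have h3 : ∀ x : F, x * θ ^ ((j : ℕ)) = x * θ ^ ((j : ℕ)) := fun _ => rfl
    rw [← h1] at h2
    nlinarith [h2]
  -- ===== the bridge between the modular condition and scalar relations =====
  have hbridge : ∀ j k : ℕ, (j % e = k % e) ↔
      (∃ u : K, θ ^ j = algebraMap K F u * θ ^ k) := by
    intro j k
    have hθj : ∀ i : ℕ, θ ^ i = ((α ^ (N * i) : Fˣ) : F) := by
      intro i; rw [hθdef, ← Units.val_pow_eq_pow_val, ← pow_mul]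
    set w : Fˣ := α ^ ((N * j : ℤ) - (N * k : ℤ)) with hwdef
    have hwval : θ ^ j = (w : F) * θ ^ k := by
      rw [hθj j, hθj k, ← Units.val_mul]
      congr 1
      rw [hwdef, ← zpow_natCast α (N * j), ← zpow_natCast α (N * k), ← zpow_add]
      congr 1
      push_cast
      ring
    have hrange : (∃ u : K, θ ^ j = algebraMap K F u * θ ^ k)
        ↔ ((w : F) ∈ Set.range (algebraMap K F)) := by
      constructor
      · rintro ⟨u, hu⟩
        refine ⟨u, ?_⟩
        apply mul_right_cancel₀ (hθne k)
        rw [← hu, hwval]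
      · rintro ⟨u, hu⟩
        exact ⟨u, by rw [hwval, hu]⟩
    have hord : orderOf α = r - 1 := by
      rw [orderOf_eq_card_of_forall_mem_zpowers hα, Nat.card_eq_fintype_card,
        Fintype.card_units, hcardF]
    have hpow : ((w : F) ∈ Set.range (algebraMap K F)) ↔ w ^ (q - 1) = 1 := by
      rw [mem_range_iff_pow (K := K) _ (Units.ne_zero w), hcardK,
        ← Units.val_pow_eq_pow_val]
      exact Units.val_eq_one
    have hzpow : w ^ (q - 1) = 1 ↔
        ((r - 1 : ℕ) : ℤ) ∣ ((N * j : ℤ) - (N * k : ℤ)) * ((q - 1 : ℕ) : ℤ) := by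
      have hw2 : w ^ (q - 1)
          = α ^ (((N * j : ℤ) - (N * k : ℤ)) * ((q - 1 : ℕ) : ℤ)) := by
        rw [hwdef, ← zpow_natCast (α ^ ((N * j : ℤ) - (N * k : ℤ))) (q - 1), ← zpow_mul]
      rw [hw2, ← orderOf_dvd_iff_zpow_eq_one, hord]
    have harith : (((r - 1 : ℕ)) : ℤ) ∣ ((N * j : ℤ) - (N * k : ℤ)) * ((q - 1 : ℕ) : ℤ)
        ↔ (e : ℤ) ∣ (j : ℤ) - (k : ℤ) := by
      have hq1ne : ((q - 1 : ℕ) : ℤ) ≠ 0 := Int.natCast_ne_zero.mpr (by omega)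
      have h1 : ((r - 1 : ℕ) : ℤ) = ((d : ℕ) : ℤ) * ((q - 1 : ℕ) : ℤ) := by
        exact_mod_cast hdq.symm
      rw [h1, mul_dvd_mul_iff_right hq1ne]
      have h2 : ((d : ℕ) : ℤ) = (N₂ : ℤ) * (e : ℤ) := by exact_mod_cast he
      have h3 : (N * j : ℤ) - (N * k : ℤ)
          = (N₂ : ℤ) * ((N' : ℤ) * ((j : ℤ) - (k : ℤ))) := by
        have h4 : (N : ℤ) = (N₂ : ℤ) * (N' : ℤ) := by exact_mod_cast hN'
        rw [h4]; ring
      rw [h2, h3, mul_dvd_mul_iff_left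
        (show (N₂ : ℤ) ≠ 0 from Int.natCast_ne_zero.mpr (by omega))]
      constructor
      · intro hdvd
        have hcop' : IsCoprime (e : ℤ) (N' : ℤ) := by
          rw [Int.isCoprime_iff_gcd_eq_one, Int.gcd_natCast_natCast]
          exact Nat.Coprime.symm hcop
        exact hcop'.dvd_of_dvd_mul_left hdvd
      · intro hdvd
        exact Dvd.dvd.mul_left hdvd _
    have hmod : (j % e = k % e) ↔ (e : ℤ) ∣ (j : ℤ) - (k : ℤ) := by
      rw [show (j % e = k % e) ↔ Nat.ModEq e j k from Iff.rfl, Nat.modEq_iff_dvd]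
      exact dvd_sub_comm
    exact hmod.trans (harith.symm.trans (hzpow.symm.trans (hpow.symm.trans hrange.symm)))
  -- ===== counting over pairs of positions =====
  have hcount2 : ∀ j k : Fin n,
      q ^ 2 * ((Finset.univ.filter fun β : Fˣ =>
          Algebra.trace K F ((β : F) * θ ^ ((j : ℕ))) = 0 ∧
          Algebra.trace K F ((β : F) * θ ^ ((k : ℕ))) = 0).card) + q ^ 2
        + (if (j : ℕ) % e = (k : ℕ) % e then 1 else 0) * r
      = (if (j : ℕ) % e = (k : ℕ) % e then 1 else 0) * (q * r) + r := by
    intro j k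
    have h1 := aux_units_count2 (F := F)
      (fun x => Algebra.trace K F (x * θ ^ ((j : ℕ))) = 0)
      (fun x => Algebra.trace K F (x * θ ^ ((k : ℕ))) = 0) (by simp) (by simp)
    by_cases hc : (j : ℕ) % e = (k : ℕ) % e
    · obtain ⟨u, hu⟩ := (hbridge (j : ℕ) (k : ℕ)).mp hc
      have hfeq : (Finset.univ.filter fun x : F =>
          Algebra.trace K F (x * θ ^ ((j : ℕ))) = 0 ∧
          Algebra.trace K F (x * θ ^ ((k : ℕ))) = 0)
          = (Finset.univ.filter fun x : F =>
            Algebra.trace K F (x * θ ^ ((k : ℕ))) = 0) := by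
        ext x
        simp only [Finset.mem_filter, Finset.mem_univ, true_and]
        constructor
        · rintro ⟨-, h2⟩; exact h2
        · intro h2
          refine ⟨?_, h2⟩
          rw [hu, show x * (algebraMap K F u * θ ^ ((k : ℕ)))
              = u • (x * θ ^ ((k : ℕ))) from by rw [Algebra.smul_def]; ring,
            map_smul, h2, smul_zero]
      have h2 := count_one (K := K) (θ ^ ((k : ℕ))) (hθne k)
      rw [hcardK, hcardF] at h2
      rw [hfeq] at h1
      rw [← h1] at h2
      rw [if_pos hc]
      nlinarith [h2]
    · have hb1 : ∀ u : K, θ ^ ((j : ℕ)) ≠ algebraMap K F u * θ ^ ((k : ℕ)) := by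
        intro u hu
        exact hc ((hbridge (j : ℕ) (k : ℕ)).mpr ⟨u, hu⟩)
      have hb2 : ∀ u : K, θ ^ ((k : ℕ)) ≠ algebraMap K F u * θ ^ ((j : ℕ)) := by
        intro u hu
        exact hc (((hbridge (k : ℕ) (j : ℕ)).mpr ⟨u, hu⟩).symm)
      have h2 := count_two (K := K) (θ ^ ((j : ℕ))) (θ ^ ((k : ℕ)))
        (hθne j) (hθne k) hb2 hb1
      rw [hcardK, hcardF] at h2
      rw [← h1] at h2
      rw [if_neg hc]
      nlinarith [h2]
  -- ===== the count of pairs satisfying the modular condition =====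
  have hE : (∑ j : Fin n, ∑ k : Fin n,
      if (j : ℕ) % e = (k : ℕ) % e then 1 else 0) = n * t := by
    have hval : ∀ x : Fin t × Fin e, ((finProdFinEquiv x : Fin (t * e)) : ℕ) % e
        = ((x.2 : ℕ)) := by
      intro x
      have : ((finProdFinEquiv x : Fin (t * e)) : ℕ) = (x.2 : ℕ) + e * (x.1 : ℕ) := by
        simp [finProdFinEquiv]
      rw [this, Nat.add_mul_mod_self_left, Nat.mod_eq_of_lt x.2.isLt]
    set F1 : Fin n ≃ Fin t × Fin e := (finCongr hnet).trans finProdFinEquiv.symm with hF1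
    have hmodF : ∀ j : Fin n, (j : ℕ) % e = (((F1 j).2 : ℕ)) := by
      intro j
      have h1 : ((finProdFinEquiv (F1 j) : Fin (t * e)) : ℕ) = (j : ℕ) := by
        simp only [hF1, Equiv.trans_apply, Equiv.apply_symm_apply, finCongr_apply,
          Fin.coe_cast]
      rw [← h1, hval]
    calc (∑ j : Fin n, ∑ k : Fin n, if (j : ℕ) % e = (k : ℕ) % e then 1 else 0)
        = ∑ j : Fin n, ∑ k : Fin n,
            (if ((F1 j).2 : ℕ) = ((F1 k).2 : ℕ) then 1 else 0) := by
          refine Finset.sum_congr rfl fun j _ => Finset.sum_congr rfl fun k _ => ?_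
          rw [hmodF j, hmodF k]
      _ = ∑ j : Fin n, ∑ y : Fin t × Fin e,
            (if ((F1 j).2 : ℕ) = ((y.2 : ℕ)) then 1 else 0) := by
          refine Finset.sum_congr rfl fun j _ => ?_
          exact Equiv.sum_comp F1 fun y => if ((F1 j).2 : ℕ) = ((y.2 : ℕ)) then 1 else 0
      _ = ∑ x : Fin t × Fin e, ∑ y : Fin t × Fin e,
            (if ((x.2 : ℕ)) = ((y.2 : ℕ)) then 1 else 0) := by
          exact Equiv.sum_comp F1 (fun x => ∑ y : Fin t × Fin e,
            if ((x.2 : ℕ)) = ((y.2 : ℕ)) then 1 else 0)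
      _ = ∑ x : Fin t × Fin e, t := by
          refine Finset.sum_congr rfl fun x _ => ?_
          rw [Fintype.sum_prod_type]
          have hin : ∀ y1 : Fin t, (∑ y2 : Fin e,
              if ((x.2 : ℕ)) = ((y2 : ℕ)) then (1 : ℕ) else 0) = 1 := by
            intro y1
            have h5 : (∑ y2 : Fin e, if ((x.2 : ℕ)) = ((y2 : ℕ)) then (1 : ℕ) else 0)
                = ∑ y2 : Fin e, if x.2 = y2 then (1 : ℕ) else 0 :=
              Finset.sum_congr rfl fun y2 _ => by
                congr 1
                simp [Fin.val_inj]
            rw [h5]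
            simp
          rw [Finset.sum_congr rfl fun y1 _ => hin y1, Finset.sum_const,
            Finset.card_univ, Fintype.card_fin, smul_eq_mul, mul_one]
      _ = n * t := by
          rw [Finset.sum_const, Finset.card_univ, Fintype.card_prod,
            Fintype.card_fin, Fintype.card_fin, smul_eq_mul, hnet]
  -- ===== first moment =====
  have hzsum : ∀ β : Fˣ, z β = ∑ j : Fin n,
      (if Algebra.trace K F ((β : F) * θ ^ ((j : ℕ))) = 0 then 1 else 0) := by
    intro β
    rw [hzdef]
    exact Finset.card_filter _ _
  have hS1 : q * (∑ β : Fˣ, z β) + n * q = n * r := by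
    have hswap : (∑ β : Fˣ, z β) = ∑ j : Fin n,
        ((Finset.univ.filter fun β : Fˣ =>
          Algebra.trace K F ((β : F) * θ ^ ((j : ℕ))) = 0).card) := by
      calc (∑ β : Fˣ, z β)
          = ∑ β : Fˣ, ∑ j : Fin n,
            (if Algebra.trace K F ((β : F) * θ ^ ((j : ℕ))) = 0 then 1 else 0) :=
            Finset.sum_congr rfl fun β _ => hzsum β
        _ = ∑ j : Fin n, ∑ β : Fˣ,
            (if Algebra.trace K F ((β : F) * θ ^ ((j : ℕ))) = 0 then 1 else 0) :=
            Finset.sum_comm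
        _ = _ := Finset.sum_congr rfl fun j _ => (Finset.card_filter _ _).symm
    rw [hswap, Finset.mul_sum]
    have h1 : (∑ j : Fin n, (q * ((Finset.univ.filter fun β : Fˣ =>
        Algebra.trace K F ((β : F) * θ ^ ((j : ℕ))) = 0).card) + q))
        = ∑ j : Fin n, r := Finset.sum_congr rfl fun j _ => hcount1 j
    rw [Finset.sum_add_distrib, Finset.sum_const, Finset.card_univ, Fintype.card_fin,
      smul_eq_mul, Finset.sum_const, Finset.card_univ, Fintype.card_fin, smul_eq_mul] at h1
    exact h1
  -- ===== second moment =====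
  have hS2 : q ^ 2 * (∑ β : Fˣ, z β * z β) + n ^ 2 * q ^ 2
      + (∑ j : Fin n, ∑ k : Fin n,
          if (j : ℕ) % e = (k : ℕ) % e then 1 else 0) * r
      = (∑ j : Fin n, ∑ k : Fin n,
          if (j : ℕ) % e = (k : ℕ) % e then 1 else 0) * q * r + n ^ 2 * r := by
    have hswap2 : (∑ β : Fˣ, z β * z β) = ∑ j : Fin n, ∑ k : Fin n,
        ((Finset.univ.filter fun β : Fˣ =>
          Algebra.trace K F ((β : F) * θ ^ ((j : ℕ))) = 0 ∧
          Algebra.trace K F ((β : F) * θ ^ ((k : ℕ))) = 0).card) := by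
      have hzz : ∀ β : Fˣ, z β * z β = ∑ j : Fin n, ∑ k : Fin n,
          (if Algebra.trace K F ((β : F) * θ ^ ((j : ℕ))) = 0 ∧
            Algebra.trace K F ((β : F) * θ ^ ((k : ℕ))) = 0 then 1 else 0) := by
        intro β
        rw [hzsum β, Finset.sum_mul_sum]
        refine Finset.sum_congr rfl fun j _ => Finset.sum_congr rfl fun k _ => ?_
        by_cases h1 : Algebra.trace K F ((β : F) * θ ^ ((j : ℕ))) = 0 <;>
          by_cases h2 : Algebra.trace K F ((β : F) * θ ^ ((k : ℕ))) = 0 <;>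
          simp [h1, h2]
      calc (∑ β : Fˣ, z β * z β)
          = ∑ β : Fˣ, ∑ j : Fin n, ∑ k : Fin n,
            (if Algebra.trace K F ((β : F) * θ ^ ((j : ℕ))) = 0 ∧
              Algebra.trace K F ((β : F) * θ ^ ((k : ℕ))) = 0 then 1 else 0) :=
            Finset.sum_congr rfl fun β _ => hzz β
        _ = ∑ j : Fin n, ∑ β : Fˣ, ∑ k : Fin n,
            (if Algebra.trace K F ((β : F) * θ ^ ((j : ℕ))) = 0 ∧
              Algebra.trace K F ((β : F) * θ ^ ((k : ℕ))) = 0 then 1 else 0) :=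
            Finset.sum_comm
        _ = ∑ j : Fin n, ∑ k : Fin n, ∑ β : Fˣ,
            (if Algebra.trace K F ((β : F) * θ ^ ((j : ℕ))) = 0 ∧
              Algebra.trace K F ((β : F) * θ ^ ((k : ℕ))) = 0 then 1 else 0) :=
            Finset.sum_congr rfl fun j _ => Finset.sum_comm
        _ = _ := Finset.sum_congr rfl fun j _ => Finset.sum_congr rfl fun k _ =>
            (Finset.card_filter _ _).symm
    have hsum : (∑ j : Fin n, ∑ k : Fin n,
        (q ^ 2 * ((Finset.univ.filter fun β : Fˣ =>
          Algebra.trace K F ((β : F) * θ ^ ((j : ℕ))) = 0 ∧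
          Algebra.trace K F ((β : F) * θ ^ ((k : ℕ))) = 0).card) + q ^ 2
          + (if (j : ℕ) % e = (k : ℕ) % e then 1 else 0) * r))
        = ∑ j : Fin n, ∑ k : Fin n,
          ((if (j : ℕ) % e = (k : ℕ) % e then 1 else 0) * (q * r) + r) :=
      Finset.sum_congr rfl fun j _ => Finset.sum_congr rfl fun k _ => hcount2 j k
    simp only [Finset.sum_add_distrib, ← Finset.mul_sum, ← Finset.sum_mul,
      Finset.sum_const, Finset.card_univ, Fintype.card_fin, smul_eq_mul] at hsum
    rw [hswap2]
    nlinarith [hsum]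
  -- ===== pass to the integers =====
  have hr1 : ((r - 1 : ℕ) : ℤ) = (r : ℤ) - 1 := by omega
  have e1 : (q : ℤ) * (∑ β : Fˣ, ((z β : ℕ) : ℤ)) + (n : ℤ) * q = (n : ℤ) * r := by
    exact_mod_cast hS1
  have e2 : (q : ℤ) ^ 2 * (∑ β : Fˣ, ((z β : ℕ) : ℤ) * ((z β : ℕ) : ℤ))
      + (n : ℤ) ^ 2 * (q : ℤ) ^ 2 + ((n : ℤ) * t) * r
      = ((n : ℤ) * t) * q * r + (n : ℤ) ^ 2 * r := by
    have h := hS2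
    rw [hE] at h
    exact_mod_cast h
  have e3 : (n : ℤ) * (N : ℤ) = (r : ℤ) - 1 := by
    have h : (n : ℤ) * (N : ℤ) = ((r - 1 : ℕ) : ℤ) := by exact_mod_cast hnN
    rw [h, hr1]
  have e5 : (t : ℤ) * (N : ℤ) = (N₂ : ℤ) * ((q : ℤ) - 1) := by
    have h : (t : ℤ) * (N : ℤ) = ((N₂ : ℕ) : ℤ) * ((q - 1 : ℕ) : ℤ) := by exact_mod_cast he5
    rw [h]
    congr 1
    omega
  have hmain : (q : ℤ) ^ 2 * (((r : ℤ) - 1) * (∑ β : Fˣ, ((z β : ℕ) : ℤ) * ((z β : ℕ) : ℤ))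
      - (∑ β : Fˣ, ((z β : ℕ) : ℤ)) ^ 2)
      = (n : ℤ) ^ 2 * r * ((q : ℤ) - 1) ^ 2 * ((N₂ : ℤ) - 1) := by
    linear_combination ((r : ℤ) - 1) * e2
      - ((q : ℤ) * (∑ β : Fˣ, ((z β : ℕ) : ℤ)) + (n : ℤ) * r - (n : ℤ) * q) * e1
      - (n : ℤ) * r * ((q : ℤ) - 1) * t * e3
      + (n : ℤ) ^ 2 * r * ((q : ℤ) - 1) * e5
  -- ===== variance identity =====
  have hCU : ((Fintype.card Fˣ : ℕ) : ℤ) = (r : ℤ) - 1 := by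
    rw [Fintype.card_units, hcardF]
    omega
  have hvar : (∑ β : Fˣ, ∑ γ : Fˣ, (((z β : ℕ) : ℤ) - ((z γ : ℕ) : ℤ)) ^ 2)
      = 2 * ((r : ℤ) - 1) * (∑ β : Fˣ, ((z β : ℕ) : ℤ) * ((z β : ℕ) : ℤ))
        - 2 * (∑ β : Fˣ, ((z β : ℕ) : ℤ)) ^ 2 := by
    have hinner : ∀ b : Fˣ, (∑ γ : Fˣ, (((z b : ℕ) : ℤ) - ((z γ : ℕ) : ℤ)) ^ 2)
        = ((r : ℤ) - 1) * (((z b : ℕ) : ℤ) * ((z b : ℕ) : ℤ))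
          + (∑ β : Fˣ, ((z β : ℕ) : ℤ) * ((z β : ℕ) : ℤ))
          - (2 * ((z b : ℕ) : ℤ)) * (∑ β : Fˣ, ((z β : ℕ) : ℤ)) := by
      intro b
      have hexp : ∀ γ : Fˣ, (((z b : ℕ) : ℤ) - ((z γ : ℕ) : ℤ)) ^ 2
          = ((z b : ℕ) : ℤ) * ((z b : ℕ) : ℤ) + ((z γ : ℕ) : ℤ) * ((z γ : ℕ) : ℤ)
            - (2 * ((z b : ℕ) : ℤ)) * ((z γ : ℕ) : ℤ) := fun γ => by ring
      rw [Finset.sum_congr rfl fun γ _ => hexp γ, Finset.sum_sub_distrib,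
        Finset.sum_add_distrib, Finset.sum_const, Finset.card_univ, ← Finset.mul_sum,
        nsmul_eq_mul, hCU]
    rw [Finset.sum_congr rfl fun b _ => hinner b, Finset.sum_sub_distrib,
      Finset.sum_add_distrib, Finset.sum_const, Finset.card_univ, nsmul_eq_mul, hCU,
      ← Finset.mul_sum, ← Finset.sum_mul]
    have hpull : (∑ b : Fˣ, 2 * ((z b : ℕ) : ℤ)) = 2 * (∑ β : Fˣ, ((z β : ℕ) : ℤ)) := by
      rw [Finset.mul_sum]
    rw [hpull]
    ring
  -- ===== conclusion =====
  constructor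
  · intro hconst
    have hsumzero : (∑ β : Fˣ, ∑ γ : Fˣ, (((z β : ℕ) : ℤ) - ((z γ : ℕ) : ℤ)) ^ 2) = 0 :=
      Finset.sum_eq_zero fun β _ => Finset.sum_eq_zero fun γ _ => by rw [hconst β γ]; ring
    have h0 : ((r : ℤ) - 1) * (∑ β : Fˣ, ((z β : ℕ) : ℤ) * ((z β : ℕ) : ℤ))
        - (∑ β : Fˣ, ((z β : ℕ) : ℤ)) ^ 2 = 0 := by
      rw [hsumzero] at hvar
      linarith
    have h1 : (n : ℤ) ^ 2 * r * ((q : ℤ) - 1) ^ 2 * ((N₂ : ℤ) - 1) = 0 := by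
      rw [← hmain, h0, mul_zero]
    have hne : (n : ℤ) ^ 2 * r * ((q : ℤ) - 1) ^ 2 ≠ 0 := by
      have h2 : (0 : ℤ) < (n : ℤ) := by exact_mod_cast hnpos
      have h3 : (0 : ℤ) < (r : ℤ) := by positivity
      have h4 : (0 : ℤ) < (q : ℤ) - 1 := by omega
      positivity
    have h5 : ((N₂ : ℤ) - 1) = 0 := by
      rcases mul_eq_zero.mp h1 with h | h
      · exact absurd h hne
      · exact h
    omega
  · intro hN21
    have hrhs0 : (n : ℤ) ^ 2 * r * ((q : ℤ) - 1) ^ 2 * ((N₂ : ℤ) - 1) = 0 := by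
      rw [hN21]
      push_cast
      ring
    have hq0 : ((q : ℤ)) ^ 2 ≠ 0 := pow_ne_zero _ (by exact_mod_cast (by omega : q ≠ 0))
    have h0 : ((r : ℤ) - 1) * (∑ β : Fˣ, ((z β : ℕ) : ℤ) * ((z β : ℕ) : ℤ))
        - (∑ β : Fˣ, ((z β : ℕ) : ℤ)) ^ 2 = 0 := by
      rw [hrhs0] at hmain
      exact (mul_eq_zero.mp hmain).resolve_left hq0
    have hsq0 : (∑ β : Fˣ, ∑ γ : Fˣ, (((z β : ℕ) : ℤ) - ((z γ : ℕ) : ℤ)) ^ 2) = 0 := by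
      rw [hvar]
      linear_combination 2 * h0
    intro β γ
    have h1 := (Finset.sum_eq_zero_iff_of_nonneg
      (fun b (_ : b ∈ Finset.univ) =>
        Finset.sum_nonneg fun c _ => sq_nonneg (((z b : ℕ) : ℤ) - ((z c : ℕ) : ℤ)))).mp
      hsq0 β (Finset.mem_univ β)
    have h2 := (Finset.sum_eq_zero_iff_of_nonneg
      (fun c (_ : c ∈ Finset.univ) =>
        sq_nonneg (((z β : ℕ) : ℤ) - ((z c : ℕ) : ℤ)))).mp h1 γ (Finset.mem_univ γ)
    have h3 : ((z β : ℕ) : ℤ) - ((z γ : ℕ) : ℤ) = 0 := by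
      have := sq_eq_zero_iff.mp h2
      exact this
    have h4 : ((z β : ℕ) : ℤ) = ((z γ : ℕ) : ℤ) := by linarith
    exact_mod_cast h4
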